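/- Let X be a bounded subset of ℂ and let C be a connected component of fill(X). Then C = fill(X ∩ C). -/

import Mathlib

/-- The *filling* of a set `X ⊆ ℂ`: the union of `X` with all bounded connected
components of `ℂ \ X`. -/
def fill (X : Set ℂ) : Set ℂ :=
  {z : ℂ | Bornology.IsBounded (connectedComponentIn Xᶜ z)}

namespace FillProofAux

open Set Metric Bornology

lemma mem_fill_iff {X : Set ℂ} {z : ℂ} :
    z ∈ fill X ↔ IsBounded (connectedComponentIn Xᶜ z) := Iff.rfl

lemma subset_fill (X : Set ℂ) : X ⊆ fill X := by
  intro x hx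
  have h : connectedComponentIn Xᶜ x = ∅ :=
    connectedComponentIn_eq_empty (by simp [hx])
  exact mem_fill_iff.2 (by rw [h]; exact isBounded_empty)

/-- The "shell" `{x : ℂ | s < ‖x‖}` is preconnected (for `0 ≤ s`). -/
lemma shell_preconn {s : ℝ} (hs : 0 ≤ s) : IsPreconnected {x : ℂ | s < ‖x‖} := by
  have himg : {x : ℂ | s < ‖x‖} =
      (fun p : ℝ × ℝ => (s + Real.exp p.1) • Complex.exp (p.2 * Complex.I)) ''
        (Set.univ : Set (ℝ × ℝ)) := by
    ext x
    constructor
    · intro hx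
      have hpos : 0 < ‖x‖ - s := by
        have : s < ‖x‖ := hx
        linarith
      refine ⟨(Real.log (‖x‖ - s), Complex.arg x), trivial, ?_⟩
      show (s + Real.exp (Real.log (‖x‖ - s))) • Complex.exp ((Complex.arg x : ℂ) * Complex.I) = x
      rw [Real.exp_log hpos]
      have : s + (‖x‖ - s) = ‖x‖ := by ring
      rw [this, Complex.real_smul]
      exact Complex.norm_mul_exp_arg_mul_I x
    · rintro ⟨⟨a, θ⟩, -, rfl⟩
      have h1 : ‖Complex.exp ((θ : ℂ) * Complex.I)‖ = 1 := by
        exact Complex.norm_exp_ofReal_mul_I θ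
      have h2 : 0 < Real.exp a := Real.exp_pos a
      simp only [mem_setOf_eq, norm_smul, Real.norm_eq_abs, h1, mul_one]
      rw [abs_of_nonneg (by linarith)]
      linarith
  rw [himg]
  refine isPreconnected_univ.image _ ?_
  refine Continuous.continuousOn ?_
  refine Continuous.smul (f := fun p : ℝ × ℝ => s + Real.exp p.1)
    (g := fun p : ℝ × ℝ => Complex.exp (p.2 * Complex.I)) ?_ ?_
  · exact continuous_const.add (Real.continuous_exp.comp continuous_fst)
  · exact Complex.continuous_exp.comp
      ((Complex.continuous_ofReal.comp continuous_snd).mul continuous_const)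

lemma shell_unbounded (s : ℝ) : ¬ IsBounded {x : ℂ | s < ‖x‖} := by
  intro h
  obtain ⟨c, hc⟩ := isBounded_iff_forall_norm_le.1 h
  set t : ℝ := max (max s c) 0 + 1 with ht
  have htpos : 0 ≤ t := by positivity
  have hnorm : ‖(t : ℂ)‖ = t := by
    rw [Complex.norm_real, Real.norm_eq_abs, abs_of_nonneg htpos]
  have hmem : (t : ℂ) ∈ {x : ℂ | s < ‖x‖} := by
    rw [mem_setOf_eq, hnorm, ht]
    have : s ≤ max (max s c) 0 := le_trans (le_max_left s c) (le_max_left _ _)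
    linarith
  have := hc _ hmem
  rw [hnorm, ht] at this
  have : c ≤ max (max s c) 0 := le_trans (le_max_right s c) (le_max_left _ _)
  linarith [hc _ hmem, hnorm]

lemma exists_norm_gt {P : Set ℂ} (hP : ¬ IsBounded P) (c : ℝ) : ∃ p ∈ P, c < ‖p‖ := by
  by_contra h
  push_neg at h
  exact hP (isBounded_iff_forall_norm_le.2 ⟨c, h⟩)

/-- Any unbounded preconnected subset of `Sᶜ` is contained in any unbounded
connected component of `Sᶜ` (for `S` bounded). -/
lemma absorb {S : Set ℂ} (hS : IsBounded S) {z : ℂ}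
    (hz : ¬ IsBounded (connectedComponentIn Sᶜ z)) {T : Set ℂ}
    (hT : IsPreconnected T) (hTS : T ⊆ Sᶜ) (hTu : ¬ IsBounded T) :
    T ⊆ connectedComponentIn Sᶜ z := by
  obtain ⟨c, hc⟩ := isBounded_iff_forall_norm_le.1 hS
  set s := max c 0 with hs
  set A := {x : ℂ | s < ‖x‖} with hA
  have hApre : IsPreconnected A := shell_preconn (le_max_right _ _)
  have hAS : A ⊆ Sᶜ := fun x hx hxS =>
    absurd (hc x hxS) (not_le.2 (lt_of_le_of_lt (le_max_left c 0) hx))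
  have hzS : z ∈ Sᶜ := by
    by_contra h
    exact hz (by rw [connectedComponentIn_eq_empty h]; exact isBounded_empty)
  obtain ⟨p, hpZ, hps⟩ := exists_norm_gt hz s
  obtain ⟨q, hqT, hqs⟩ := exists_norm_gt hTu s
  have hW1 : IsPreconnected (connectedComponentIn Sᶜ z ∪ A) :=
    IsPreconnected.union p hpZ hps isPreconnected_connectedComponentIn hApre
  have hW2 : IsPreconnected ((connectedComponentIn Sᶜ z ∪ A) ∪ T) :=
    IsPreconnected.union q (Or.inr hqs) hqT hW1 hT
  have hWsub : (connectedComponentIn Sᶜ z ∪ A) ∪ T ⊆ Sᶜ := by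
    rintro x ((hx | hx) | hx)
    · exact connectedComponentIn_subset _ _ hx
    · exact hAS hx
    · exact hTS hx
  have hzW : z ∈ (connectedComponentIn Sᶜ z ∪ A) ∪ T :=
    Or.inl (Or.inl (mem_connectedComponentIn hzS))
  have hsub := hW2.subset_connectedComponentIn hzW hWsub
  exact fun t ht => hsub (Or.inr ht)

lemma fill_mono {A B : Set ℂ} (h : A ⊆ B) : fill A ⊆ fill B := by
  intro z hz
  by_cases hzB : z ∈ Bᶜ
  · have hsub : connectedComponentIn Bᶜ z ⊆ connectedComponentIn Aᶜ z :=
      isPreconnected_connectedComponentIn.subset_connectedComponentIn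
        (mem_connectedComponentIn hzB)
        ((connectedComponentIn_subset _ _).trans (compl_subset_compl.2 h))
    exact mem_fill_iff.2 ((mem_fill_iff.1 hz).subset hsub)
  · exact mem_fill_iff.2
      (by rw [connectedComponentIn_eq_empty hzB]; exact isBounded_empty)

lemma compl_fill_eq {X : Set ℂ} (hX : IsBounded X) {w : ℂ} (hw : w ∉ fill X) :
    connectedComponentIn Xᶜ w = (fill X)ᶜ := by
  have hw' : ¬ IsBounded (connectedComponentIn Xᶜ w) := hw
  apply Set.Subset.antisymm
  · intro y hy
    have hyc : connectedComponentIn Xᶜ w = connectedComponentIn Xᶜ y :=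
      connectedComponentIn_eq hy
    intro hyF
    exact hw' (by rw [hyc]; exact hyF)
  · intro y hy
    have hyu : ¬ IsBounded (connectedComponentIn Xᶜ y) := hy
    have hyX : y ∈ Xᶜ := by
      by_contra h
      exact hyu (by rw [connectedComponentIn_eq_empty h]; exact isBounded_empty)
    exact absorb hX hw' isPreconnected_connectedComponentIn
      (connectedComponentIn_subset _ _) hyu (mem_connectedComponentIn hyX)

lemma fill_bounded {X : Set ℂ} (hX : IsBounded X) : IsBounded (fill X) := by
  obtain ⟨c, hc⟩ := isBounded_iff_forall_norm_le.1 hX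
  refine isBounded_iff_forall_norm_le.2 ⟨max c 0, ?_⟩
  intro x hx
  by_contra h
  push_neg at h
  have hsub : {y : ℂ | max c 0 < ‖y‖} ⊆ Xᶜ := fun y hy hyX =>
    absurd (hc y hyX) (not_le.2 (lt_of_le_of_lt (le_max_left _ _) hy))
  have hsub2 : {y : ℂ | max c 0 < ‖y‖} ⊆ connectedComponentIn Xᶜ x :=
    (shell_preconn (le_max_right _ _)).subset_connectedComponentIn h hsub
  exact (shell_unbounded (max c 0)) ((mem_fill_iff.1 hx).subset hsub2)

lemma fill_idem {X : Set ℂ} (hX : IsBounded X) : fill (fill X) = fill X := by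
  apply Set.Subset.antisymm _ (subset_fill _)
  intro q hq
  by_contra hqF
  have hFc := compl_fill_eq hX hqF
  have hFc_pre : IsPreconnected ((fill X)ᶜ) := hFc ▸ isPreconnected_connectedComponentIn
  have hqmem : q ∈ (fill X)ᶜ := hqF
  have hsub : (fill X)ᶜ ⊆ connectedComponentIn (fill X)ᶜ q :=
    hFc_pre.subset_connectedComponentIn hqmem (subset_refl _)
  have hunb : ¬ IsBounded ((fill X)ᶜ : Set ℂ) := by
    rw [← hFc]; exact hqF
  exact hunb ((mem_fill_iff.1 hq).subset hsub)

lemma fill_empty : fill (∅ : Set ℂ) = ∅ := by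
  ext z
  simp only [fill, mem_setOf_eq, compl_empty, connectedComponentIn_univ,
    mem_empty_iff_false, iff_false]
  rw [PreconnectedSpace.connectedComponent_eq_univ]
  exact fun h => shell_unbounded 0 (h.subset (subset_univ _))

lemma fill_preconn {C : Set ℂ} (hC : IsPreconnected C) : IsPreconnected (fill C) := by
  rcases eq_empty_or_nonempty C with rfl | ⟨c₀, hc₀⟩
  · rw [fill_empty]; exact isPreconnected_empty
  refine isPreconnected_of_forall c₀ (fun y hy => ?_)
  by_cases hyC : y ∈ C
  · exact ⟨C, subset_fill C, hc₀, hyC, hC⟩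
  set V := connectedComponentIn Cᶜ y with hV
  have hyV : y ∈ V := mem_connectedComponentIn hyC
  have hVb : IsBounded V := hy
  have hVC : V ⊆ Cᶜ := connectedComponentIn_subset _ _
  have hVsub : V ⊆ fill C := by
    intro v hv
    have hveq : connectedComponentIn Cᶜ y = connectedComponentIn Cᶜ v :=
      connectedComponentIn_eq hv
    exact mem_fill_iff.2 (by rw [← hveq]; exact hVb)
  have hVpre : IsPreconnected V := isPreconnected_connectedComponentIn
  by_cases h1 : (closure C ∩ V).Nonempty
  · obtain ⟨p, hpC, hpV⟩ := h1
    have hCp : IsPreconnected (insert p C) :=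
      hC.subset_closure (subset_insert _ _) (insert_subset hpC subset_closure)
    have hpre : IsPreconnected (insert p C ∪ V) :=
      IsPreconnected.union p (mem_insert _ _) hpV hCp hVpre
    refine ⟨insert p C ∪ V, ?_, Or.inl (mem_insert_of_mem _ hc₀), Or.inr hyV, hpre⟩
    rintro w (hw | hw)
    · rcases mem_insert_iff.1 hw with rfl | hwC
      · exact hVsub hpV
      · exact subset_fill C hwC
    · exact hVsub hw
  by_cases h2 : (C ∩ closure V).Nonempty
  · obtain ⟨p, hpC, hpV⟩ := h2
    have hVp : IsPreconnected (insert p V) :=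
      hVpre.subset_closure (subset_insert _ _) (insert_subset hpV subset_closure)
    have hpre : IsPreconnected (C ∪ insert p V) :=
      IsPreconnected.union p hpC (mem_insert _ _) hC hVp
    refine ⟨C ∪ insert p V, ?_, Or.inl hc₀, Or.inr (mem_insert_of_mem _ hyV), hpre⟩
    rintro w (hw | hw)
    · exact subset_fill C hw
    · rcases mem_insert_iff.1 hw with rfl | hwV
      · exact subset_fill C hpC
      · exact hVsub hwV
  exfalso
  have hVclosed : closure V ⊆ V := by
    intro q hq
    by_contra hqV
    have hqC : q ∈ Cᶜ := fun hqC' => h2 ⟨q, hqC', hq⟩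
    have hpre : IsPreconnected (insert q V) :=
      hVpre.subset_closure (subset_insert _ _) (insert_subset hq subset_closure)
    have hsub : insert q V ⊆ connectedComponentIn Cᶜ y :=
      hpre.subset_connectedComponentIn (mem_insert_of_mem _ hyV)
        (insert_subset hqC hVC)
    exact hqV (hsub (mem_insert _ _))
  have hVopen : IsOpen V := by
    rw [Metric.isOpen_iff]
    intro p hp
    have hpnc : p ∈ (closure C)ᶜ := fun h => h1 ⟨p, h, hp⟩
    obtain ⟨ε, hε, hball⟩ := Metric.isOpen_iff.1 isClosed_closure.isOpen_compl p hpnc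
    refine ⟨ε, hε, ?_⟩
    have hballC : ball p ε ⊆ Cᶜ := fun w hw hwC => hball hw (subset_closure hwC)
    have hb : ball p ε ⊆ connectedComponentIn Cᶜ p :=
      (convex_ball p ε).isPreconnected.subset_connectedComponentIn
        (mem_ball_self hε) hballC
    rwa [← connectedComponentIn_eq hp] at hb
  have hclopen : IsClopen V := ⟨isClosed_of_closure_subset hVclosed, hVopen⟩
  rcases isClopen_iff.1 hclopen with h | h
  · rw [h] at hyV; exact hyV
  · rw [h] at hVb
    exact shell_unbounded 0 (hVb.subset (subset_univ _))

lemma preconn_witness {M M₁ M₂ : Set ℂ} (hM : IsPreconnected M) (hsplit : M = M₁ ∪ M₂)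
    (h1 : M₁.Nonempty) (h2 : M₂.Nonempty) :
    ((closure M₁ ∩ M₂) ∪ (M₁ ∩ closure M₂)).Nonempty := by
  by_contra hgoal
  have hwit : ∀ p, ¬ (p ∈ closure M₁ ∧ p ∈ M₂) ∧ ¬ (p ∈ M₁ ∧ p ∈ closure M₂) := by
    intro p
    constructor
    · exact fun h => hgoal ⟨p, Or.inl ⟨h.1, h.2⟩⟩
    · exact fun h => hgoal ⟨p, Or.inr ⟨h.1, h.2⟩⟩
  have hcov : M ⊆ (closure M₂)ᶜ ∪ (closure M₁)ᶜ := by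
    intro m hm
    rcases (hsplit ▸ hm) with h | h
    · exact Or.inl (fun hc => (hwit m).2 ⟨h, hc⟩)
    · exact Or.inr (fun hc => (hwit m).1 ⟨hc, h⟩)
  obtain ⟨m₁, hm₁⟩ := h1
  obtain ⟨m₂, hm₂⟩ := h2
  have hne1 : (M ∩ (closure M₂)ᶜ).Nonempty :=
    ⟨m₁, hsplit ▸ Or.inl hm₁, fun hc => (hwit m₁).2 ⟨hm₁, hc⟩⟩
  have hne2 : (M ∩ (closure M₁)ᶜ).Nonempty :=
    ⟨m₂, hsplit ▸ Or.inr hm₂, fun hc => (hwit m₂).1 ⟨hc, hm₂⟩⟩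
  obtain ⟨m, hmM, hmu, hmv⟩ :=
    hM _ _ isClosed_closure.isOpen_compl isClosed_closure.isOpen_compl hcov hne1 hne2
  rcases (hsplit ▸ hmM) with h | h
  · exact hmv (subset_closure h)
  · exact hmu (subset_closure h)

end FillProofAux

open Set Metric Bornology FillProofAux

/-- If `X` is a bounded subset of `ℂ` and `C` is a connected component of `fill X`,
then `C = fill (X ∩ C)`. -/
theorem component_of_fill_eq_fill_inter (X : Set ℂ) (hX : Bornology.IsBounded X)
    (C : Set ℂ) (hC : ∃ z ∈ fill X, C = connectedComponentIn (fill X) z) :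
    C = fill (X ∩ C) := by
  obtain ⟨z₀, hz₀F, rfl⟩ := hC
  set F := fill X with hFdef
  set C := connectedComponentIn F z₀ with hCdef
  have hz₀C : z₀ ∈ C := mem_connectedComponentIn hz₀F
  have hCF : C ⊆ F := connectedComponentIn_subset _ _
  have hCpre : IsPreconnected C := isPreconnected_connectedComponentIn
  set Y := X ∩ C with hYdef
  have hYb : IsBounded Y := hX.subset inter_subset_left
  -- the easy inclusion
  have h3a : fill Y ⊆ C := by
    have h1 : fill C ⊆ F := by
      have h := fill_mono hCF
      rwa [fill_idem hX] at h
    have h2 : fill C ⊆ C :=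
      (fill_preconn hCpre).subset_connectedComponentIn (subset_fill C hz₀C) h1
    exact (fill_mono inter_subset_right).trans h2
  -- the hard inclusion
  have h3b : C ⊆ fill Y := by
    intro z hzC
    by_contra hz
    have hz' : ¬ IsBounded (connectedComponentIn Yᶜ z) := hz
    have hzY : z ∉ Y := fun h => hz (subset_fill Y h)
    have hzYc : z ∈ Yᶜ := hzY
    set M := connectedComponentIn Yᶜ z with hMdef
    have hMY : M ⊆ Yᶜ := connectedComponentIn_subset _ _
    obtain ⟨c, hc⟩ := isBounded_iff_forall_norm_le.1 hX
    set s := max c 0 with hs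
    set A := {x : ℂ | s < ‖x‖} with hAdef
    have hApre : IsPreconnected A := shell_preconn (le_max_right _ _)
    have hAunb : ¬ IsBounded A := shell_unbounded s
    have hAX : A ⊆ Xᶜ := fun x hx hxX =>
      absurd (hc x hxX) (not_le.2 (lt_of_le_of_lt (le_max_left _ _) hx))
    have hAY : A ⊆ Yᶜ := fun x hx hxY => hAX hx hxY.1
    have hAM : A ⊆ M := absorb hYb hz' hApre hAY hAunb
    have hAFc : A ⊆ Fᶜ := by
      intro a ha haF
      have hsub : A ⊆ connectedComponentIn Xᶜ a :=
        hApre.subset_connectedComponentIn ha hAX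
      exact hAunb ((mem_fill_iff.1 haF).subset hsub)
    have hAne : A.Nonempty := by
      rcases exists_norm_gt hAunb 0 with ⟨p, hp, -⟩
      exact ⟨p, hp⟩
    obtain ⟨a₀, ha₀⟩ := hAne
    have hFc_eq : connectedComponentIn Xᶜ a₀ = (Fᶜ : Set ℂ) := compl_fill_eq hX (hAFc ha₀)
    have hFc_pre : IsPreconnected (Fᶜ : Set ℂ) := hFc_eq ▸ isPreconnected_connectedComponentIn
    have hFcX : (Fᶜ : Set ℂ) ⊆ Xᶜ := compl_subset_compl.2 (subset_fill X)
    have hFc_unb : ¬ IsBounded (Fᶜ : Set ℂ) := fun h => hAunb (h.subset hAFc)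
    have hclCF : closure C ∩ F ⊆ C := by
      rintro w ⟨hwcl, hwF⟩
      have hpre : IsPreconnected (insert w C) :=
        hCpre.subset_closure (subset_insert _ _) (insert_subset hwcl subset_closure)
      have hsub : insert w C ⊆ connectedComponentIn F z₀ :=
        hpre.subset_connectedComponentIn (mem_insert_of_mem _ hz₀C)
          (insert_subset hwF hCF)
      exact hsub (mem_insert _ _)
    set D := (Fᶜ : Set ℂ) ∪ (M ∩ C) with hDdef
    have hDX : D ⊆ Xᶜ := by
      rintro x (hx | ⟨hxM, hxC⟩)
      · exact hFcX hx
      · exact fun hxX => (hMY hxM) ⟨hxX, hxC⟩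
    have hzD : z ∈ D := Or.inr ⟨mem_connectedComponentIn hzYc, hzC⟩
    have hFcD : (Fᶜ : Set ℂ) ⊆ D := subset_union_left
    have hDpre : IsPreconnected D := by
      intro u v hu hv hcov hneu hnev
      by_contra hcon
      have hvide : ∀ p ∈ D, p ∈ u → p ∈ v → False := by
        intro p hp hpu hpv
        exact hcon ⟨p, hp, hpu, hpv⟩
      have aux : ∀ u' v' : Set ℂ, IsOpen u' → IsOpen v' → D ⊆ u' ∪ v' →
          (∀ p ∈ D, p ∈ u' → p ∈ v' → False) → (Fᶜ : Set ℂ) ⊆ u' →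
          ∀ pv ∈ D, pv ∈ v' → False := by
        clear hvide hcov hneu hnev hcon hu hv
        intro u v hu hv hcov hvide hFu pv hpvD hpvv
        have hpvMC : pv ∈ M ∩ C := by
          rcases hpvD with h | h
          · exact absurd hpvv (fun hv' => hvide pv (Or.inl h) (hFu h) hv')
          · exact h
        set M₁ := M ∩ C ∩ v with hM₁
        set M₂ := M \ M₁ with hM₂
        have hM1ne : M₁.Nonempty := ⟨pv, ⟨hpvMC.1, hpvMC.2⟩, hpvv⟩
        have hM2ne : M₂.Nonempty := by
          refine ⟨a₀, hAM ha₀, ?_⟩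
          intro h
          exact (hAFc ha₀) (hCF h.1.2)
        have hMpre : IsPreconnected M := isPreconnected_connectedComponentIn
        have hsplit : M = M₁ ∪ M₂ := by
          ext m
          constructor
          · intro hm
            by_cases h : m ∈ M₁
            · exact Or.inl h
            · exact Or.inr ⟨hm, h⟩
          · rintro (h | h)
            · exact h.1.1
            · exact h.1
        obtain ⟨q, hq⟩ := preconn_witness hMpre hsplit hM1ne hM2ne
        rcases hq with ⟨hqcl, hqM2⟩ | ⟨hqM1, hqcl⟩
        · -- q ∈ closure M₁ ∩ M₂
          have hqclC : q ∈ closure C := closure_mono (fun x hx => hx.1.2) hqcl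
          by_cases hqF : q ∈ F
          · have hqC : q ∈ C := hclCF ⟨hqclC, hqF⟩
            have hqD : q ∈ D := Or.inr ⟨hqM2.1, hqC⟩
            rcases hcov hqD with hqu | hqv
            · obtain ⟨o, hou, hoM1⟩ := mem_closure_iff.1 hqcl u hu hqu
              exact hvide o (Or.inr ⟨hoM1.1.1, hoM1.1.2⟩) hou hoM1.2
            · exact hqM2.2 ⟨⟨hqM2.1, hqC⟩, hqv⟩
          · have hqu : q ∈ u := hFu hqF
            obtain ⟨o, hou, hoM1⟩ := mem_closure_iff.1 hqcl u hu hqu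
            exact hvide o (Or.inr ⟨hoM1.1.1, hoM1.1.2⟩) hou hoM1.2
        · -- q ∈ M₁ ∩ closure M₂
          obtain ⟨⟨hqM, hqC⟩, hqv⟩ := hqM1
          have hqX : q ∈ Xᶜ := fun hqX' => (hMY hqM) ⟨hqX', hqC⟩
          have hqF : q ∈ F := hCF hqC
          have hstep1 : q ∉ closure (Fᶜ : Set ℂ) := by
            intro hq'
            have hpre : IsPreconnected (insert q (Fᶜ : Set ℂ)) :=
              hFc_pre.subset_closure (subset_insert _ _)
                (insert_subset hq' subset_closure)
            have hsub : insert q (Fᶜ : Set ℂ) ⊆ Xᶜ := insert_subset hqX hFcX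
            have hsub2 : insert q (Fᶜ : Set ℂ) ⊆ connectedComponentIn Xᶜ q :=
              hpre.subset_connectedComponentIn (mem_insert _ _) hsub
            have hunb : ¬ IsBounded (connectedComponentIn Xᶜ q) := fun h =>
              hFc_unb (h.subset (fun x hx => hsub2 (mem_insert_of_mem _ hx)))
            exact hunb (mem_fill_iff.1 hqF)
          have hstep2 : q ∉ closure (F \ C) := by
            intro hq'
            have hqO : q ∈ (closure (Fᶜ : Set ℂ))ᶜ := hstep1
            obtain ⟨ε, hε, hball⟩ :=
              Metric.isOpen_iff.1 isClosed_closure.isOpen_compl q hqO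
            have hballF : ball q ε ⊆ F := by
              intro w hw
              by_contra hwF
              exact (hball hw) (subset_closure hwF)
            have hballC : ball q ε ⊆ C := by
              have hb1 : ball q ε ⊆ connectedComponentIn F q :=
                (convex_ball q ε).isPreconnected.subset_connectedComponentIn
                  (mem_ball_self hε) hballF
              rwa [← connectedComponentIn_eq (show q ∈ connectedComponentIn F z₀ from hqC)]
                at hb1
            obtain ⟨o, hob, hoFC⟩ :=
              mem_closure_iff.1 hq' (ball q ε) isOpen_ball (mem_ball_self hε)
            exact hoFC.2 (hballC hob)
          have hstep3 : M₂ ⊆ (Fᶜ : Set ℂ) ∪ ((F \ C) ∪ (M ∩ C ∩ u)) := by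
            rintro m ⟨hmM, hmn⟩
            by_cases hmF : m ∈ F
            · by_cases hmC : m ∈ C
              · rcases hcov (Or.inr ⟨hmM, hmC⟩) with hmu | hmv
                · exact Or.inr (Or.inr ⟨⟨hmM, hmC⟩, hmu⟩)
                · exact absurd ⟨⟨hmM, hmC⟩, hmv⟩ hmn
              · exact Or.inr (Or.inl ⟨hmF, hmC⟩)
            · exact Or.inl hmF
          have hqcl' := closure_mono hstep3 hqcl
          rw [closure_union, closure_union] at hqcl'
          rcases hqcl' with h | h | h
          · exact hstep1 h
          · exact hstep2 h
          · obtain ⟨o, hov, hom⟩ := mem_closure_iff.1 h v hv hqv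
            exact hvide o (Or.inr ⟨hom.1.1, hom.1.2⟩) hom.2 hov
      have hFor : (Fᶜ : Set ℂ) ⊆ u ∨ (Fᶜ : Set ℂ) ⊆ v := by
        by_cases h1 : ((Fᶜ : Set ℂ) ∩ u).Nonempty
        · by_cases h2 : ((Fᶜ : Set ℂ) ∩ v).Nonempty
          · obtain ⟨p, hp, hpu, hpv⟩ :=
              hFc_pre u v hu hv (fun x hx => hcov (hFcD hx)) h1 h2
            exact (hvide p (hFcD hp) hpu hpv).elim
          · left
            intro x hx
            rcases hcov (hFcD hx) with h | h
            · exact h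
            · exact absurd ⟨x, hx, h⟩ h2
        · right
          intro x hx
          rcases hcov (hFcD hx) with h | h
          · exact absurd ⟨x, hx, h⟩ h1
          · exact h
      obtain ⟨pu, hpuD, hpuu⟩ := hneu
      obtain ⟨pv, hpvD, hpvv⟩ := hnev
      rcases hFor with h | h
      · exact aux u v hu hv hcov hvide h pv hpvD hpvv
      · exact aux v u hv hu (by rw [union_comm]; exact hcov)
          (fun p hp h1 h2 => hvide p hp h2 h1) h pu hpuD hpuu
    have hfinal : D ⊆ connectedComponentIn Xᶜ z :=
      hDpre.subset_connectedComponentIn hzD hDX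
    have hunb : ¬ IsBounded (connectedComponentIn Xᶜ z) := fun h =>
      hAunb (h.subset ((hAFc.trans hFcD).trans hfinal))
    exact hunb (mem_fill_iff.1 (hCF hzC))
  exact Set.Subset.antisymm h3b h3a
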